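/- Fix k lines ℓ_1, ..., ℓ_k spanning P^{2k-1} and three (k-1)-planes Λ_1, Λ_2, Λ_3 such that each ℓ_i meets each Λ_j in exactly one point and all these intersection points are distinct. Then there is a unique Segre variety X ≅ P^1 × P^{k-1} ⊂ P^{2k-1} containing ℓ_1, ..., ℓ_k, Λ_1, Λ_2, Λ_3, and the ℓ_i appear in X as lines of the ruling P^1 × {q_i}. -/

import Mathlib

/-- The affine cone over the standard Segre variety `P^1 × P^{k-1} ⊂ P^{2k-1}`: the set of
decomposable vectors in `𝕜^(2k)` (coordinates indexed by `Fin 2 × Fin k`). -/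
def segreCone (𝕜 : Type*) [Field 𝕜] (k : ℕ) : Set (Fin 2 × Fin k → 𝕜) :=
  {x | ∃ (v : Fin 2 → 𝕜) (w : Fin k → 𝕜), x = fun q => v q.1 * w q.2}

/-- The linear embedding `v ↦ v ⊗ w` of `𝕜^2` into `𝕜^(2k)`, whose projectivization (for
`w ≠ 0`) is a ruling line `P^1 × {q}` of the standard Segre variety. -/
def rulingEmbed (𝕜 : Type*) [Field 𝕜] (k : ℕ) (w : Fin k → 𝕜) :
    (Fin 2 → 𝕜) →ₗ[𝕜] (Fin 2 × Fin k → 𝕜) where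
  toFun v := fun p => v p.1 * w p.2
  map_add' v v' := by funext p; simp [add_mul]
  map_smul' c v := by funext p; simp [mul_comm, mul_assoc, mul_left_comm]

namespace SegreAux

variable {𝕜 : Type*} [Field 𝕜] {k : ℕ}

/-- `v ⊗ w` as a function. -/
def tp (v : Fin 2 → 𝕜) (w : Fin k → 𝕜) : Fin 2 × Fin k → 𝕜 := fun p => v p.1 * w p.2

@[simp] lemma tp_apply (v : Fin 2 → 𝕜) (w : Fin k → 𝕜) (p : Fin 2 × Fin k) :
    tp v w p = v p.1 * w p.2 := rfl

lemma rulingEmbed_apply (w : Fin k → 𝕜) (v : Fin 2 → 𝕜) : rulingEmbed 𝕜 k w v = tp v w := rfl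

lemma mem_segreCone_iff {x : Fin 2 × Fin k → 𝕜} :
    x ∈ segreCone 𝕜 k ↔ ∃ v w, x = tp v w := Iff.rfl

lemma tp_mem_cone (v : Fin 2 → 𝕜) (w : Fin k → 𝕜) : tp v w ∈ segreCone 𝕜 k := ⟨v, w, rfl⟩

lemma cone_minor {x : Fin 2 × Fin k → 𝕜} (hx : x ∈ segreCone 𝕜 k) (m m' : Fin k) :
    x (0, m) * x (1, m') = x (0, m') * x (1, m) := by
  obtain ⟨v, w, rfl⟩ := hx
  simp; ring

lemma tp_ne_zero {v : Fin 2 → 𝕜} {w : Fin k → 𝕜} (hv : v ≠ 0) (hw : w ≠ 0) :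
    tp v w ≠ 0 := by
  obtain ⟨a, ha⟩ := Function.ne_iff.1 hv
  obtain ⟨m, hm⟩ := Function.ne_iff.1 hw
  intro h
  have := congrFun h (a, m)
  simp at this
  rcases this with h | h
  · exact ha h
  · exact hm h

lemma proportional {ι : Type*} {q q' : ι → 𝕜} (hq : q ≠ 0)
    (h : ∀ m m', q m * q' m' = q m' * q' m) : ∃ c : 𝕜, q' = c • q := by
  obtain ⟨m₀, hm₀⟩ := Function.ne_iff.1 hq
  simp only [Pi.zero_apply] at hm₀
  refine ⟨q' m₀ / q m₀, funext fun m => ?_⟩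
  have := h m m₀
  rw [Pi.smul_apply, smul_eq_mul, div_mul_eq_mul_div, eq_div_iff hm₀]
  linear_combination -this

lemma tp_injective {q : Fin k → 𝕜} (hq : q ≠ 0) {u u' : Fin 2 → 𝕜}
    (h : tp u q = tp u' q) : u = u' := by
  obtain ⟨m, hm⟩ := Function.ne_iff.1 hq
  simp only [Pi.zero_apply] at hm
  funext a
  have := congrFun h (a, m)
  simp only [tp_apply] at this
  exact mul_right_cancel₀ hm this

lemma tp_expand (v : Fin 2 → 𝕜) (w : Fin k → 𝕜) :
    tp v w = ∑ i, w i • tp v (Pi.single i 1) := by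
  funext p
  rw [Finset.sum_apply, Finset.sum_eq_single p.2]
  · simp [mul_comm]
  · intro i _ hi
    simp [Pi.single_eq_of_ne (Ne.symm hi)]
  · simp

/-- rank-one criterion: if `u⊗q + u'⊗q'` is in the cone and `q, q'` have a nonvanishing
2×2-minor, then `u, u'` are proportional-ish: the minor of `u,u'` vanishes. -/
lemma rank_one {u u' : Fin 2 → 𝕜} {q q' : Fin k → 𝕜}
    (hx : tp u q + tp u' q' ∈ segreCone 𝕜 k)
    (hind : ∃ m m', q m * q' m' ≠ q m' * q' m) :
    u 0 * u' 1 = u 1 * u' 0 := by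
  obtain ⟨m, m', hmm⟩ := hind
  have h := cone_minor hx m m'
  simp at h
  have key : (u 0 * u' 1 - u 1 * u' 0) * (q m * q' m' - q m' * q' m) = 0 := by
    linear_combination h
  rcases mul_eq_zero.1 key with h' | h'
  · linear_combination h'
  · exact absurd (sub_eq_zero.1 h') hmm

lemma tp_sum_right {ι : Type*} [Fintype ι] (v : Fin 2 → 𝕜) (c : ι → 𝕜) (w : ι → Fin k → 𝕜) :
    tp v (∑ i, c i • w i) = ∑ i, c i • tp v (w i) := by
  funext p
  rw [Finset.sum_apply]
  simp [tp, Finset.sum_apply, Finset.mul_sum]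
  apply Finset.sum_congr rfl
  intros; ring

@[simp] lemma tp_zero_right (v : Fin 2 → 𝕜) : tp v (0 : Fin k → 𝕜) = 0 := by
  funext p; simp [tp]

@[simp] lemma tp_zero_left (w : Fin k → 𝕜) : tp (0 : Fin 2 → 𝕜) w = 0 := by
  funext p; simp [tp]

lemma minor_to_all {u u' : Fin 2 → 𝕜} (h : u 0 * u' 1 = u 1 * u' 0) :
    ∀ a a', u a * u' a' = u a' * u' a := by
  intro a a'
  fin_cases a <;> fin_cases a' <;> first | rfl | exact h | exact h.symm

/-- `V2 j` are the three distinguished directions `(1,0), (0,1), (1,1)` in `𝕜²`. -/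
def V2 : Fin 3 → Fin 2 → 𝕜 := ![![1,0],![0,1],![1,1]]

lemma V2_ne_zero : ∀ j : Fin 3, (V2 j : Fin 2 → 𝕜) ≠ 0 := by
  intro j hj
  fin_cases j
  · simpa [V2] using congrFun hj 0
  · simpa [V2] using congrFun hj 1
  · simpa [V2] using congrFun hj 0

lemma V2_add : (V2 2 : Fin 2 → 𝕜) = V2 0 + V2 1 := by
  funext a; fin_cases a <;> simp [V2, Matrix.vecHead, Matrix.vecTail]

lemma uniq_core (hk : 1 ≤ k) (h : (Fin 2 × Fin k → 𝕜) ≃ₗ[𝕜] (Fin 2 × Fin k → 𝕜))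
    (q : Fin k → Fin k → 𝕜) (hq0 : ∀ i, q i ≠ 0)
    (hrul : ∀ i, Submodule.map (h : (Fin 2 × Fin k → 𝕜) →ₗ[𝕜] (Fin 2 × Fin k → 𝕜))
        (LinearMap.range (rulingEmbed 𝕜 k (q i)))
        = LinearMap.range (rulingEmbed 𝕜 k (Pi.single i 1)))
    (hcol : ∀ j : Fin 3, ∀ w : Fin k → 𝕜, h.symm (tp (V2 j) w) ∈ segreCone 𝕜 k) :
    ⇑h '' segreCone 𝕜 k = segreCone 𝕜 k := by
  have i0 : Fin k := ⟨0, hk⟩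
  -- u i j : the direction of the preimage of (V2 j) ⊗ δ_i
  have key : ∀ i (j : Fin 3), ∃ u : Fin 2 → 𝕜,
      h.symm (tp (V2 j) (Pi.single i 1)) = tp u (q i) := by
    intro i j
    have hmem : h (h.symm (tp (V2 j) (Pi.single i 1)))
        ∈ LinearMap.range (rulingEmbed 𝕜 k (Pi.single i 1)) := by
      rw [h.apply_symm_apply]
      exact ⟨V2 j, rfl⟩
    rw [← hrul i] at hmem
    obtain ⟨z, hz, hzy⟩ := hmem
    obtain ⟨u, hu⟩ := hz
    refine ⟨u, ?_⟩
    have := h.injective hzy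
    rw [← this, ← hu]
    rfl
  choose u hu using key
  have hune : ∀ i (j : Fin 3), u i j ≠ 0 := by
    intro i j h0
    have h1 : h.symm (tp (V2 j) (Pi.single i 1)) = 0 := by
      rw [hu i j, h0, tp_zero_left]
    have h2 : tp (V2 j) (Pi.single i (1:𝕜)) = 0 := by
      have := congrArg h h1
      simpa using this
    exact tp_ne_zero (V2_ne_zero j)
      (by simpa using Function.ne_iff.2 ⟨i, by simp⟩) h2
  have hadd : ∀ i, u i 2 = u i 0 + u i 1 := by
    intro i
    apply tp_injective (hq0 i)
    rw [← hu i 2]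
    have hsplit : tp (V2 2) (Pi.single i (1:𝕜)) =
        tp (V2 0) (Pi.single i 1) + tp (V2 1) (Pi.single i 1) := by
      funext p
      simp [tp, V2_add, add_mul]
    rw [hsplit, map_add, hu i 0, hu i 1]
    funext p
    simp [tp]
    ring
  -- linear independence and basis property of the q i
  have hstd : ∀ i, ∃ t : Fin 2 → 𝕜, t ≠ 0 ∧
      h (tp ![1,0] (q i)) = tp t (Pi.single i 1) := by
    intro i
    have hmem : h (tp ![1,0] (q i))
        ∈ LinearMap.range (rulingEmbed 𝕜 k (Pi.single i 1)) := by
      rw [← hrul i]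
      exact Submodule.mem_map_of_mem ⟨![1,0], rfl⟩
    obtain ⟨t, ht⟩ := hmem
    refine ⟨t, ?_, ht.symm⟩
    rintro rfl
    have h0 : h (tp ![1,0] (q i)) = 0 := by
      rw [← ht]; exact map_zero _
    have h1 : tp (![1,0] : Fin 2 → 𝕜) (q i) = 0 := by
      simpa using congrArg h.symm h0
    exact tp_ne_zero (by intro hv; simpa using congrFun hv 0) (hq0 i) h1
  choose t ht0 ht using hstd
  have hqli : LinearIndependent 𝕜 q := by
    rw [Fintype.linearIndependent_iff]
    intro c hc i
    have h1 : (∑ i', c i' • tp ![1,0] (q i')) = 0 := by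
      rw [← tp_sum_right, hc, tp_zero_right]
    have h3 : ∑ i', c i' • tp (t i') (Pi.single i' (1:𝕜)) = 0 := by
      calc ∑ i', c i' • tp (t i') (Pi.single i' (1:𝕜))
          = ∑ i', c i' • h (tp ![1,0] (q i')) := by simp_rw [ht]
        _ = h (∑ i', c i' • tp ![1,0] (q i')) := by rw [map_sum]; simp_rw [map_smul]
        _ = 0 := by rw [h1, map_zero]
    obtain ⟨a, ha⟩ := Function.ne_iff.1 (ht0 i)
    simp only [Pi.zero_apply] at ha
    have h4 := congrFun h3 (a, i)
    rw [Finset.sum_apply] at h4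
    simp only [Pi.smul_apply, tp_apply, smul_eq_mul, Pi.zero_apply] at h4
    rw [Finset.sum_eq_single i] at h4
    · simp only [Pi.single_eq_same, mul_one] at h4
      exact (mul_eq_zero.1 h4).resolve_right ha
    · intro b _ hb
      simp [Pi.single_eq_of_ne (Ne.symm hb)]
    · simp
  haveI : Nonempty (Fin k) := ⟨i0⟩
  have hcard : Fintype.card (Fin k) = Module.finrank 𝕜 (Fin k → 𝕜) := by
    simp [Module.finrank_pi]
  let b : Module.Basis (Fin k) 𝕜 (Fin k → 𝕜) := basisOfLinearIndependentOfCardEqFinrank hqli hcard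
  have hb : ⇑b = q := coe_basisOfLinearIndependentOfCardEqFinrank _ _
  -- pairwise minors of the q i
  have hpairs : ∀ i : Fin k, i ≠ i0 → ∃ m m', q i0 m * q i m' ≠ q i0 m' * q i m := by
    intro i hi
    by_contra hcon
    push_neg at hcon
    obtain ⟨c, hc⟩ := proportional (hq0 i0) hcon
    have hf : Function.Injective ![i0, i] := by
      intro a b hab
      fin_cases a <;> fin_cases b <;> simp_all [Matrix.cons_val_zero, Matrix.cons_val_one]
    have hli2 : LinearIndependent 𝕜 ![q i0, q i] := by
      have hcomp := hqli.comp ![i0, i] hf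
      have : q ∘ ![i0, i] = ![q i0, q i] := by
        funext a; fin_cases a <;> rfl
      rwa [this] at hcomp
    rw [LinearIndependent.pair_iff] at hli2
    have := (hli2 c (-1) (by rw [hc]; module)).2
    simpa using this
  -- colinearity of the directions
  have hcolin : ∀ (j : Fin 3) (i : Fin k), ∃ c : 𝕜, c ≠ 0 ∧ u i j = c • u i0 j := by
    intro j i
    by_cases hi : i = i0
    · exact ⟨1, one_ne_zero, by rw [hi, one_smul]⟩
    obtain ⟨m, m', hmm⟩ := hpairs i hi
    have hx : tp (u i0 j) (q i0) + tp (u i j) (q i) ∈ segreCone 𝕜 k := by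
      have hc := hcol j (Pi.single i0 1 + Pi.single i 1)
      have hsplit : tp (V2 j) (Pi.single i0 1 + Pi.single i 1) =
          tp (V2 j) (Pi.single i0 (1:𝕜)) + tp (V2 j) (Pi.single i 1) := by
        funext p; simp [tp, mul_add]
      rw [hsplit, map_add, hu, hu] at hc
      exact hc
    have hmin := rank_one hx ⟨m, m', hmm⟩
    obtain ⟨c, hc⟩ := proportional (hune i0 j) (minor_to_all hmin)
    refine ⟨c, ?_, hc⟩
    rintro rfl
    rw [zero_smul] at hc
    exact hune i j hc
  choose α hα0 hα using hcolin 0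
  choose β hβ0 hβ using hcolin 1
  choose γ hγ0 hγ using hcolin 2
  -- independence of the two base directions
  have hD : ∀ a c : 𝕜, a • u i0 0 + c • u i0 1 = 0 → a = 0 ∧ c = 0 := by
    intro a c hac
    have h1 : a • h.symm (tp (V2 0) (Pi.single i0 (1:𝕜)))
        + c • h.symm (tp (V2 1) (Pi.single i0 1)) = 0 := by
      rw [hu, hu]
      funext p
      have h2 := congrFun hac p.1
      simp only [Pi.add_apply, Pi.smul_apply, smul_eq_mul, Pi.zero_apply] at h2 ⊢
      simp only [tp_apply]
      linear_combination q i0 p.2 * h2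
    have h3 : a • tp (V2 0) (Pi.single i0 (1:𝕜)) + c • tp (V2 1) (Pi.single i0 1) = 0 := by
      have := congrArg h h1
      simpa [map_add, map_smul] using this
    constructor
    · have := congrFun h3 (0, i0)
      simpa [tp, V2, Pi.single_eq_same] using this
    · have := congrFun h3 (1, i0)
      simpa [tp, V2, Pi.single_eq_same, Matrix.vecHead, Matrix.vecTail] using this
  have hDne : u i0 0 0 * u i0 1 1 - u i0 0 1 * u i0 1 0 ≠ 0 := by
    intro hD0
    obtain ⟨c, hc⟩ := proportional (hune i0 0) (minor_to_all (sub_eq_zero.1 hD0))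
    have := (hD c (-1) (by rw [hc]; module)).2
    simpa using this
  have hαβ : ∀ i, β i = α i := by
    intro i
    have h1 : u i 2 = γ i • u i0 0 + γ i • u i0 1 := by
      rw [hγ, hadd i0, smul_add]
    have h2 : u i 2 = α i • u i0 0 + β i • u i0 1 := by
      rw [hadd i, hα, hβ]
    have h3 : (α i - γ i) • u i0 0 + (β i - γ i) • u i0 1 = 0 := by
      funext a
      have e := congrFun (h1.symm.trans h2) a
      simp only [Pi.add_apply, Pi.smul_apply, smul_eq_mul, Pi.zero_apply] at e ⊢
      linear_combination -e
    obtain ⟨e1, e2⟩ := hD _ _ h3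
    rw [sub_eq_zero.1 e2, sub_eq_zero.1 e1]
  -- the key formula for `h.symm` on the standard cone
  have KEY : ∀ s tt : 𝕜, ∀ w : Fin k → 𝕜,
      h.symm (tp ![s, tt] w) =
        tp (fun a => s * u i0 0 a + tt * u i0 1 a)
          (fun m => ∑ i, w i * α i * q i m) := by
    intro s tt w
    have hsplit : tp ![s, tt] w = ∑ i, w i •
        (s • tp (V2 0) (Pi.single i 1) + tt • tp (V2 1) (Pi.single i 1)) := by
      rw [tp_expand ![s, tt] w]
      apply Finset.sum_congr rfl
      intro i _
      congr 1
      funext p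
      rcases p with ⟨a, m⟩
      simp only [tp_apply, Pi.add_apply, Pi.smul_apply, smul_eq_mul]
      fin_cases a <;> simp [V2, Matrix.vecHead, Matrix.vecTail] <;> ring
    rw [hsplit, map_sum]
    simp only [map_add, map_smul, hu]
    funext p
    rw [Finset.sum_apply]
    simp only [Pi.smul_apply, Pi.add_apply, tp_apply, smul_eq_mul]
    rw [Finset.mul_sum]
    apply Finset.sum_congr rfl
    intro i _
    have e0 : u i 0 p.1 = α i * u i0 0 p.1 := by rw [hα i]; simp
    have e1 : u i 1 p.1 = α i * u i0 1 p.1 := by rw [hβ i, hαβ i]; simp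
    rw [e0, e1]
    ring
  -- conclude the two inclusions
  apply Set.eq_of_subset_of_subset
  · rintro x ⟨y, ⟨v, w, rfl⟩, rfl⟩
    -- write v in the basis u i0 0, u i0 1 and w in the basis q
    set D := u i0 0 0 * u i0 1 1 - u i0 0 1 * u i0 1 0 with hDdef
    set s := (v 0 * u i0 1 1 - v 1 * u i0 1 0) / D with hs
    set tt := (v 1 * u i0 0 0 - v 0 * u i0 0 1) / D with htt
    set w' : Fin k → 𝕜 := fun i => b.repr w i / α i with hw'
    have hv : (fun a => s * u i0 0 a + tt * u i0 1 a) = v := by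
      funext a
      fin_cases a <;>
        (rw [hs, htt]; field_simp; rw [hDdef]; simp only [Fin.zero_eta, Fin.mk_one]; ring)
    have hw : (fun m => ∑ i, w' i * α i * q i m) = w := by
      have hrepr : ∑ i, b.repr w i • q i = w := by
        conv_rhs => rw [← b.sum_repr w]
        simp_rw [hb]
      funext m
      have := congrFun hrepr m
      rw [Finset.sum_apply] at this
      rw [← this]
      apply Finset.sum_congr rfl
      intro i _
      rw [hw']
      simp only [Pi.smul_apply, smul_eq_mul]
      rw [div_mul_cancel₀ _ (hα0 i)]
    have : h.symm (tp ![s, tt] w') = tp v w := by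
      rw [KEY, hv, hw]
    refine ⟨![s, tt], w', ?_⟩
    show h (tp v w) = tp ![s, tt] w'
    rw [← this, h.apply_symm_apply]
  · rintro x ⟨v, w, rfl⟩
    refine ⟨h.symm (tp v w), ?_, by
      show h (h.symm (tp v w)) = tp v w
      exact h.apply_symm_apply _⟩
    have hveta : tp v w = tp ![v 0, v 1] w := by
      funext p
      rcases p with ⟨a, m⟩
      fin_cases a <;> simp [tp]
    rw [mem_segreCone_iff, hveta, KEY]
    exact ⟨_, _, rfl⟩

/-- The linear embedding `w ↦ v ⊗ w`. -/
def colEmbed (𝕜 : Type*) [Field 𝕜] (k : ℕ) (v : Fin 2 → 𝕜) :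
    (Fin k → 𝕜) →ₗ[𝕜] (Fin 2 × Fin k → 𝕜) where
  toFun w := fun p => v p.1 * w p.2
  map_add' w w' := by funext p; simp [mul_add]
  map_smul' c w := by funext p; simp; ring

lemma colEmbed_apply (v : Fin 2 → 𝕜) (w : Fin k → 𝕜) : colEmbed 𝕜 k v w = tp v w := rfl

lemma colEmbed_injective {v : Fin 2 → 𝕜} (hv : v ≠ 0) :
    Function.Injective (colEmbed 𝕜 k v) := by
  intro w w' hww
  obtain ⟨a, ha⟩ := Function.ne_iff.1 hv
  simp only [Pi.zero_apply] at ha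
  funext m
  have := congrFun hww (a, m)
  simp only [colEmbed, LinearMap.coe_mk, AddHom.coe_mk] at this
  exact mul_left_cancel₀ ha this

lemma range_rulingEmbed (w : Fin k → 𝕜) :
    LinearMap.range (rulingEmbed 𝕜 k w) =
      Submodule.span 𝕜 {tp ![1,0] w, tp ![0,1] w} := by
  apply le_antisymm
  · rintro x ⟨v, rfl⟩
    rw [Submodule.mem_span_pair]
    refine ⟨v 0, v 1, ?_⟩
    funext p
    rcases p with ⟨a, m⟩
    simp only [Pi.add_apply, Pi.smul_apply, tp_apply, smul_eq_mul]
    show _ = v a * w m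
    fin_cases a <;> simp [Matrix.vecHead, Matrix.vecTail] <;> ring
  · rw [Submodule.span_le]
    rintro x (rfl | rfl)
    · exact ⟨![1,0], rfl⟩
    · exact ⟨![0,1], rfl⟩

lemma span_pair_smul {x y : Fin 2 × Fin k → 𝕜} {c d : 𝕜} (hc : c ≠ 0) (hd : d ≠ 0) :
    Submodule.span 𝕜 {c • x, d • y} = Submodule.span 𝕜 {x, y} := by
  rw [Submodule.span_insert, Submodule.span_insert,
    Submodule.span_singleton_smul_eq (IsUnit.mk0 c hc),
    Submodule.span_singleton_smul_eq (IsUnit.mk0 d hd)]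

lemma tp_single0 (i : Fin k) :
    tp (V2 0 : Fin 2 → 𝕜) (Pi.single i 1) = Pi.single ((0 : Fin 2), i) (1 : 𝕜) := by
  funext p
  rcases p with ⟨a, m⟩
  fin_cases a <;> simp [tp, V2, Pi.single_apply, Prod.ext_iff]

lemma tp_single1 (i : Fin k) :
    tp (V2 1 : Fin 2 → 𝕜) (Pi.single i 1) = Pi.single ((1 : Fin 2), i) (1 : 𝕜) := by
  funext p
  rcases p with ⟨a, m⟩
  fin_cases a <;> simp [tp, V2, Pi.single_apply, Prod.ext_iff, Matrix.vecHead, Matrix.vecTail]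

lemma tp_single2 (i : Fin k) :
    tp (V2 2 : Fin 2 → 𝕜) (Pi.single i 1) =
      Pi.single ((0 : Fin 2), i) (1 : 𝕜) + Pi.single ((1 : Fin 2), i) (1 : 𝕜) := by
  rw [V2_add]
  have : tp ((V2 0 : Fin 2 → 𝕜) + V2 1) (Pi.single i 1) =
      tp (V2 0) (Pi.single i 1) + tp (V2 1) (Pi.single i 1) := by
    funext p; simp [tp, add_mul]
  rw [this, tp_single0, tp_single1]

end SegreAux

open SegreAux

/-- Fix `k` lines `ℓ_1, …, ℓ_k` spanning `P^{2k-1}` and three `(k-1)`-planes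
`Λ_1, Λ_2, Λ_3` such that each `ℓᵢ` meets each `Λⱼ` in exactly one point and all these
intersection points are distinct.  Then there is a unique Segre variety
`X ≅ P^1 × P^{k-1} ⊂ P^{2k-1}` (a translate of the standard Segre variety by a linear
automorphism `g` of `𝕜^(2k)`) containing all the `ℓᵢ` and `Λⱼ`, and in it the `ℓᵢ` appear
as ruling lines `P^1 × {qᵢ}`.  Lines and `(k-1)`-planes of `P^{2k-1}` are encoded as
subspaces of `𝕜^(2k)` of dimension `2` and `k` respectively. -/
theorem unique_segre_through_lines_and_planes (𝕜 : Type*) [Field 𝕜] [IsAlgClosed 𝕜]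
    (k : ℕ) (hk : 1 ≤ k)
    (ℓ : Fin k → Submodule 𝕜 (Fin 2 × Fin k → 𝕜))
    (Λ : Fin 3 → Submodule 𝕜 (Fin 2 × Fin k → 𝕜))
    (hℓ : ∀ i, Module.finrank 𝕜 (ℓ i) = 2)
    (hΛ : ∀ j, Module.finrank 𝕜 (Λ j) = k)
    (hspan : ⨆ i, ℓ i = ⊤)
    (hmeet : ∀ i j, Module.finrank 𝕜 ↥(ℓ i ⊓ Λ j) = 1)
    (hdistinct : Function.Injective fun p : Fin k × Fin 3 => ℓ p.1 ⊓ Λ p.2) :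
    ∃! X : Set (Fin 2 × Fin k → 𝕜),
      ∃ g : (Fin 2 × Fin k → 𝕜) ≃ₗ[𝕜] (Fin 2 × Fin k → 𝕜),
        X = g '' segreCone 𝕜 k ∧
        (∀ i, (ℓ i : Set (Fin 2 × Fin k → 𝕜)) ⊆ X) ∧
        (∀ j, (Λ j : Set (Fin 2 × Fin k → 𝕜)) ⊆ X) ∧
        (∀ i, ∃ q : Fin k → 𝕜, q ≠ 0 ∧
          ℓ i = Submodule.map (g : (Fin 2 × Fin k → 𝕜) →ₗ[𝕜] (Fin 2 × Fin k → 𝕜))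
            (LinearMap.range (rulingEmbed 𝕜 k q))) := by
  classical
  haveI : Nonempty (Fin k) := ⟨⟨0, hk⟩⟩
  -- choose generators of the intersection points
  have hpick : ∀ (i : Fin k) (j : Fin 3), ∃ p, p ∈ ℓ i ⊓ Λ j ∧ p ≠ 0 ∧
      ℓ i ⊓ Λ j = Submodule.span 𝕜 {p} := by
    intro i j
    have hne : ℓ i ⊓ Λ j ≠ ⊥ := by
      intro hbot
      have := hmeet i j
      rw [hbot] at this
      simp [finrank_bot] at this
    obtain ⟨p, hp, hp0⟩ := Submodule.exists_mem_ne_zero_of_ne_bot hne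
    refine ⟨p, hp, hp0, ?_⟩
    refine (Submodule.eq_of_le_of_finrank_eq ?_ ?_).symm
    · rw [Submodule.span_le, Set.singleton_subset_iff]; exact hp
    · rw [finrank_span_singleton hp0, hmeet]
  choose P hPmem hP0 hPspan using hpick
  -- distinctness of intersection points on each line
  have hsame : ∀ (i : Fin k) (j j' : Fin 3) (c : 𝕜), c ≠ 0 → c • P i j = P i j' → j = j' := by
    intro i j j' c hc hcc
    have h1 : ℓ i ⊓ Λ j' = ℓ i ⊓ Λ j := by
      rw [hPspan i j', hPspan i j, ← hcc,
        Submodule.span_singleton_smul_eq (IsUnit.mk0 c hc)]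
    have := hdistinct (a₁ := (i, j')) (a₂ := (i, j)) h1
    simp only [Prod.mk.injEq] at this
    exact this.2.symm
  -- independence of the first two points on each line
  have hPind : ∀ i, LinearIndependent 𝕜 ![P i 0, P i 1] := by
    intro i
    rw [LinearIndependent.pair_iff' (hP0 i 0)]
    intro c hc
    have hc0 : c ≠ 0 := by
      rintro rfl; rw [zero_smul] at hc; exact hP0 i 1 hc.symm
    have := hsame i 0 1 c hc0 hc
    simp at this
  -- each line is spanned by its first two intersection points
  have hspanPair : ∀ i, Submodule.span 𝕜 {P i 0, P i 1} = ℓ i := by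
    intro i
    apply Submodule.eq_of_le_of_finrank_eq
    · rw [Submodule.span_le]
      rintro x (rfl | rfl)
      · exact (hPmem i 0).1
      · exact (hPmem i 1).1
    · rw [hℓ i]
      have h1 := finrank_span_eq_card (hPind i)
      have h2 : Set.range ![P i 0, P i 1] = {P i 0, P i 1} := by
        ext z
        simp [Matrix.range_cons, Matrix.range_empty]
        tauto
      rw [h2] at h1
      rw [h1]
      simp
  -- write the third point in terms of the first two
  have hrep : ∀ i, ∃ a b : 𝕜, a ≠ 0 ∧ b ≠ 0 ∧ a • P i 0 + b • P i 1 = P i 2 := by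
    intro i
    have hmem : P i 2 ∈ Submodule.span 𝕜 {P i 0, P i 1} := by
      rw [hspanPair i]; exact (hPmem i 2).1
    obtain ⟨a, b, hab⟩ := Submodule.mem_span_pair.1 hmem
    refine ⟨a, b, ?_, ?_, hab⟩
    · rintro rfl
      rw [zero_smul, zero_add] at hab
      have hb0 : b ≠ 0 := by
        rintro rfl; rw [zero_smul] at hab; exact hP0 i 2 hab.symm
      have := hsame i 1 2 b hb0 hab
      simp at this
    · rintro rfl
      rw [zero_smul, add_zero] at hab
      have ha0 : a ≠ 0 := by
        rintro rfl; rw [zero_smul] at hab; exact hP0 i 2 hab.symm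
      have := hsame i 0 2 a ha0 hab
      simp at this
  choose a b ha0 hb0 hab using hrep
  -- the adapted basis
  set E : Fin 2 × Fin k → (Fin 2 × Fin k → 𝕜) :=
    fun x => ![a x.2 • P x.2 0, b x.2 • P x.2 1] x.1 with hEdef
  have hE0 : ∀ i, E (0, i) = a i • P i 0 := fun i => rfl
  have hE1 : ∀ i, E (1, i) = b i • P i 1 := fun i => rfl
  have hEspan : ⊤ ≤ Submodule.span 𝕜 (Set.range E) := by
    rw [← hspan]
    refine iSup_le fun i => ?_
    rw [← hspanPair i, Submodule.span_le]
    rintro x (rfl | rfl)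
    · have : P i 0 = (a i)⁻¹ • E (0, i) := by
        rw [hE0, smul_smul, inv_mul_cancel₀ (ha0 i), one_smul]
      rw [this]
      exact Submodule.smul_mem _ _ (Submodule.subset_span ⟨(0, i), rfl⟩)
    · have : P i 1 = (b i)⁻¹ • E (1, i) := by
        rw [hE1, smul_smul, inv_mul_cancel₀ (hb0 i), one_smul]
      rw [this]
      exact Submodule.smul_mem _ _ (Submodule.subset_span ⟨(1, i), rfl⟩)
  have hcard : Fintype.card (Fin 2 × Fin k) = Module.finrank 𝕜 (Fin 2 × Fin k → 𝕜) := by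
    simp [Module.finrank_pi]
  let bE : Module.Basis (Fin 2 × Fin k) 𝕜 (Fin 2 × Fin k → 𝕜) :=
    basisOfTopLeSpanOfCardEqFinrank E hEspan hcard
  have hbE : ⇑bE = E := coe_basisOfTopLeSpanOfCardEqFinrank _ _ _
  let g₀ : (Fin 2 × Fin k → 𝕜) ≃ₗ[𝕜] (Fin 2 × Fin k → 𝕜) :=
    (Pi.basisFun 𝕜 (Fin 2 × Fin k)).equiv bE (Equiv.refl _)
  have hg₀ : ∀ x, g₀ (Pi.single x 1) = E x := by
    intro x
    have h1 : g₀ ((Pi.basisFun 𝕜 (Fin 2 × Fin k)) x) = bE x := by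
      simpa using (Pi.basisFun 𝕜 (Fin 2 × Fin k)).equiv_apply (e := Equiv.refl _) x bE
    rw [Pi.basisFun_apply] at h1
    rw [h1, hbE]
  have hg0i : ∀ i, g₀ (tp (V2 0 : Fin 2 → 𝕜) (Pi.single i 1)) = a i • P i 0 := by
    intro i; rw [tp_single0, hg₀, hE0]
  have hg1i : ∀ i, g₀ (tp (V2 1 : Fin 2 → 𝕜) (Pi.single i 1)) = b i • P i 1 := by
    intro i; rw [tp_single1, hg₀, hE1]
  have hg2i : ∀ i, g₀ (tp (V2 2 : Fin 2 → 𝕜) (Pi.single i 1)) = P i 2 := by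
    intro i; rw [tp_single2, map_add, hg₀, hg₀, hE0, hE1, hab]
  -- the ruling property of g₀
  have hruleq : ∀ i, Submodule.map (g₀ : (Fin 2 × Fin k → 𝕜) →ₗ[𝕜] (Fin 2 × Fin k → 𝕜))
      (LinearMap.range (rulingEmbed 𝕜 k (Pi.single i 1))) = ℓ i := by
    intro i
    rw [range_rulingEmbed, Submodule.map_span, Set.image_insert_eq, Set.image_singleton]
    simp only [LinearEquiv.coe_coe]
    have e0 : g₀ (tp ![1,0] (Pi.single i 1)) = a i • P i 0 := hg0i i
    have e1 : g₀ (tp ![0,1] (Pi.single i 1)) = b i • P i 1 := hg1i i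
    rw [e0, e1, span_pair_smul (ha0 i) (hb0 i), hspanPair i]
  -- identification of the planes
  have hΛeq : ∀ j, Submodule.map (g₀ : (Fin 2 × Fin k → 𝕜) →ₗ[𝕜] (Fin 2 × Fin k → 𝕜))
      (LinearMap.range (colEmbed 𝕜 k (V2 j))) = Λ j := by
    intro j
    apply Submodule.eq_of_le_of_finrank_eq
    · rintro x hx
      rw [Submodule.mem_map] at hx
      obtain ⟨y, ⟨w, rfl⟩, rfl⟩ := hx
      simp only [LinearEquiv.coe_coe]
      rw [colEmbed_apply, tp_expand, map_sum]
      apply Submodule.sum_mem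
      intro i _
      rw [map_smul]
      apply Submodule.smul_mem
      fin_cases j
      · show g₀ (tp (V2 0 : Fin 2 → 𝕜) (Pi.single i 1)) ∈ Λ 0
        rw [hg0i i]
        exact Submodule.smul_mem _ _ (hPmem i 0).2
      · show g₀ (tp (V2 1 : Fin 2 → 𝕜) (Pi.single i 1)) ∈ Λ 1
        rw [hg1i i]
        exact Submodule.smul_mem _ _ (hPmem i 1).2
      · show g₀ (tp (V2 2 : Fin 2 → 𝕜) (Pi.single i 1)) ∈ Λ 2
        rw [hg2i i]
        exact (hPmem i 2).2
    · rw [LinearEquiv.finrank_map_eq,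
        LinearMap.finrank_range_of_inj (colEmbed_injective (V2_ne_zero j)), hΛ j,
        Module.finrank_pi, Fintype.card_fin]
  -- assemble existence and uniqueness
  refine ⟨⇑g₀ '' segreCone 𝕜 k, ⟨g₀, rfl, ?_, ?_, ?_⟩, ?_⟩
  · intro i x hx
    rw [← hruleq i] at hx
    simp only [SetLike.mem_coe, Submodule.mem_map, LinearMap.mem_range] at hx
    obtain ⟨y, ⟨v, rfl⟩, rfl⟩ := hx
    exact ⟨_, ⟨v, Pi.single i 1, rfl⟩, rfl⟩
  · intro j x hx
    rw [← hΛeq j] at hx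
    simp only [SetLike.mem_coe, Submodule.mem_map, LinearMap.mem_range] at hx
    obtain ⟨y, ⟨w, rfl⟩, rfl⟩ := hx
    exact ⟨_, ⟨V2 j, w, rfl⟩, rfl⟩
  · intro i
    exact ⟨Pi.single i 1, by simpa using Function.ne_iff.2 ⟨i, by simp⟩, (hruleq i).symm⟩
  · rintro Y ⟨g, rfl, hℓY, hΛY, hrulY⟩
    choose q hq0 hq using hrulY
    set h : (Fin 2 × Fin k → 𝕜) ≃ₗ[𝕜] (Fin 2 × Fin k → 𝕜) := g.trans g₀.symm with hhdef
    have hcomp : ∀ x, g₀ (h x) = g x := by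
      intro x; simp [hhdef]
    have hrulh : ∀ i, Submodule.map (h : (Fin 2 × Fin k → 𝕜) →ₗ[𝕜] (Fin 2 × Fin k → 𝕜))
        (LinearMap.range (rulingEmbed 𝕜 k (q i)))
        = LinearMap.range (rulingEmbed 𝕜 k (Pi.single i 1)) := by
      intro i
      apply Submodule.map_injective_of_injective
        (f := (g₀ : (Fin 2 × Fin k → 𝕜) →ₗ[𝕜] (Fin 2 × Fin k → 𝕜))) g₀.injective
      rw [← Submodule.map_comp]
      have hc : (g₀ : (Fin 2 × Fin k → 𝕜) →ₗ[𝕜] (Fin 2 × Fin k → 𝕜)).comp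
          (h : (Fin 2 × Fin k → 𝕜) →ₗ[𝕜] (Fin 2 × Fin k → 𝕜))
          = (g : (Fin 2 × Fin k → 𝕜) →ₗ[𝕜] (Fin 2 × Fin k → 𝕜)) := by
        apply LinearMap.ext
        intro x
        exact hcomp x
      rw [hc, hruleq i]
      exact (hq i).symm
    have hcolh : ∀ j : Fin 3, ∀ w : Fin k → 𝕜, h.symm (tp (V2 j) w) ∈ segreCone 𝕜 k := by
      intro j w
      have h1 : g₀ (tp (V2 j) w) ∈ (Λ j : Set (Fin 2 × Fin k → 𝕜)) := by
        rw [← hΛeq j]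
        exact Submodule.mem_map_of_mem ⟨w, rfl⟩
      obtain ⟨z, hz, hzz⟩ := hΛY j h1
      have hzeq : h.symm (tp (V2 j) w) = z := by
        apply g.injective
        have h2 := hcomp (h.symm (tp (V2 j) w))
        rw [h.apply_symm_apply] at h2
        rw [← h2]
        exact hzz.symm
      rw [hzeq]
      exact hz
    have hcore := uniq_core hk h q hq0 hrulh hcolh
    have himg : ⇑g '' segreCone 𝕜 k = ⇑g₀ '' (⇑h '' segreCone 𝕜 k) := by
      rw [Set.image_image]
      exact (Set.image_congr fun x _ => (hcomp x)).symm
    rw [himg, hcore]
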